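/- Fix ε ∈ (0, 1/α) and δ ∈ (0, ε). There exist γ > 0 and T > 0 such that for all t ≥ T and every Borel probability measure μ on ℝ^d with support contained in the closed ball of radius t^{1/α−ε} centered at the origin, ∫_{|y| ≤ t^{1/α−δ}} exp( −t ∫ v̂(z−y) μ(dz) ) dy ≤ exp(−t^γ). (The region of points at sub-critical distance from the support of μ contributes a negligible amount to the Laplace-functional integral.) -/

import Mathlib

open MeasureTheory

/-- The shape function `v̂(x) = min(|x|^{−α}, 1)`. -/
noncomputable def vhat (d : ℕ) (α : ℝ) (x : EuclideanSpace ℝ (Fin d)) : ℝ :=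
  min (‖x‖ ^ (-α)) 1

lemma vhat_measurable (d : ℕ) (α : ℝ) : Measurable (vhat d α) := by
  unfold vhat; fun_prop

lemma vhat_nonneg (d : ℕ) (α : ℝ) (x : EuclideanSpace ℝ (Fin d)) : 0 ≤ vhat d α x :=
  le_min (Real.rpow_nonneg (norm_nonneg x) _) zero_le_one

lemma vhat_le_one (d : ℕ) (α : ℝ) (x : EuclideanSpace ℝ (Fin d)) : vhat d α x ≤ 1 :=
  min_le_right _ _

set_option maxHeartbeats 1000000 in
/-- for `0 < δ < ε < 1/α` there are `γ, T > 0` such that for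
`t ≥ T` and every probability measure `μ` supported in the closed ball of
radius `t^{1/α−ε}`,
`∫_{|y| ≤ t^{1/α−δ}} exp(−t ∫ v̂(z−y) μ(dz)) dy ≤ exp(−t^γ)`. -/
theorem stmt_8 (d : ℕ) (hd : 1 ≤ d) (α : ℝ) (hα₁ : (d : ℝ) < α)
    (hα₂ : α < d + 2) (ε δ : ℝ) (hε : ε ∈ Set.Ioo 0 (1 / α))
    (hδ : δ ∈ Set.Ioo 0 ε) :
    ∃ γ : ℝ, 0 < γ ∧ ∃ T : ℝ, 0 < T ∧ ∀ t : ℝ, T ≤ t →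
      ∀ μ : Measure (EuclideanSpace ℝ (Fin d)), IsProbabilityMeasure μ →
        μ (Metric.closedBall (0 : EuclideanSpace ℝ (Fin d)) (t ^ (1 / α - ε)))ᶜ = 0 →
        (∫ y in Metric.closedBall (0 : EuclideanSpace ℝ (Fin d)) (t ^ (1 / α - δ)),
            Real.exp (-t * ∫ z, vhat d α (z - y) ∂μ))
          ≤ Real.exp (-t ^ γ) := by
  obtain ⟨hε0, hεα⟩ := hε
  obtain ⟨hδ0, hδε⟩ := hδ
  have hd0 : (0:ℝ) ≤ d := Nat.cast_nonneg d
  have hα0 : (0:ℝ) < α := lt_of_le_of_lt hd0 hα₁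
  have hδα : 0 < 1/α - δ := by
    have : δ < 1/α := lt_trans hδε hεα
    linarith
  have hεα' : 0 < 1/α - ε := by linarith
  set γ : ℝ := α * δ / 2 with hγdef
  have hγ0 : 0 < γ := by positivity
  set E := EuclideanSpace ℝ (Fin d)
  haveI : Nontrivial E := by
    haveI : Nonempty (Fin d) := ⟨⟨0, hd⟩⟩
    infer_instance
  set c₁ : ℝ := (volume (Metric.ball (0 : E) 1)).toReal with hc₁def
  have hc₁ : 0 ≤ c₁ := ENNReal.toReal_nonneg
  set β : ℝ := (1/α - δ) * d with hβdef
  have hβ0 : 0 ≤ β := by positivity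
  set K : ℝ := 2 ^ α with hKdef
  have hK : 0 < K := Real.rpow_pos_of_pos two_pos α
  set u0 : ℝ := max 1 (K * c₁ + K * (β/γ + 1)) with hu0def
  have hev : ∀ᶠ t : ℝ in Filter.atTop, 1 ≤ t ∧ u0 ≤ t ^ γ := by
    filter_upwards [Filter.eventually_ge_atTop (1:ℝ),
      (tendsto_rpow_atTop hγ0).eventually_ge_atTop u0] with t h1 h2
    exact ⟨h1, h2⟩
  obtain ⟨T0, hT0⟩ := Filter.eventually_atTop.mp hev
  refine ⟨γ, hγ0, max T0 1, lt_of_lt_of_le one_pos (le_max_right _ _), ?_⟩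
  intro t ht μ hμ hμsupp
  obtain ⟨ht1, htu⟩ := hT0 t (le_trans (le_max_left _ _) ht)
  have ht0 : (0:ℝ) < t := lt_of_lt_of_le one_pos ht1
  set R : ℝ := t ^ (1/α - δ) with hRdef
  set r : ℝ := t ^ (1/α - ε) with hrdef
  have hR0 : 0 < R := Real.rpow_pos_of_pos ht0 _
  have hR1 : 1 ≤ R := Real.one_le_rpow ht1 hδα.le
  have hrR : r ≤ R := Real.rpow_le_rpow_of_exponent_le ht1 (by linarith)
  set c : ℝ := (2*R) ^ (-α) with hcdef
  have hc0 : 0 < c := Real.rpow_pos_of_pos (by linarith) _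
  have hc1 : c ≤ 1 :=
    Real.rpow_le_one_of_one_le_of_nonpos (by linarith) (by linarith)
  -- inner bound
  have key : ∀ y : E, μ {y} = 0 → y ∈ Metric.closedBall (0:E) R →
      c ≤ ∫ z, vhat d α (z - y) ∂μ := by
    intro y hy hyR
    have hae : ∀ᵐ z ∂μ, c ≤ vhat d α (z - y) := by
      have h1 : ∀ᵐ z ∂μ, z ∈ Metric.closedBall (0:E) r := by
        rw [ae_iff]
        convert hμsupp using 2
        rfl
      have h2 : ∀ᵐ z ∂μ, z ≠ y := by
        rw [ae_iff]
        simpa using hy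
      filter_upwards [h1, h2] with z hz hzy
      have hzy0 : 0 < ‖z - y‖ := by
        exact norm_pos_iff.mpr (sub_ne_zero.mpr hzy)
      have hle : ‖z - y‖ ≤ 2 * R := by
        have h3 : ‖z‖ ≤ r := mem_closedBall_zero_iff.mp hz
        have h4 : ‖y‖ ≤ R := by simpa using hyR
        calc ‖z - y‖ ≤ ‖z‖ + ‖y‖ := norm_sub_le _ _
          _ ≤ 2 * R := by linarith
      have hmono : (2*R) ^ (-α) ≤ ‖z - y‖ ^ (-α) := by
        rw [Real.rpow_neg (by linarith), Real.rpow_neg hzy0.le]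
        have h5 : ‖z - y‖ ^ α ≤ (2*R) ^ α :=
          Real.rpow_le_rpow hzy0.le hle hα0.le
        exact inv_anti₀ (Real.rpow_pos_of_pos hzy0 α) h5
      exact le_min hmono hc1
    have hint : Integrable (fun z => vhat d α (z - y)) μ := by
      refine Integrable.mono' (integrable_const (1:ℝ))
        (((vhat_measurable d α).comp (measurable_id.sub measurable_const)).aestronglyMeasurable)
        ?_
      filter_upwards with z
      rw [Real.norm_eq_abs, abs_of_nonneg (vhat_nonneg d α _)]
      exact vhat_le_one d α _
    calc c = ∫ _, c ∂μ := by simp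
      _ ≤ ∫ z, vhat d α (z - y) ∂μ := integral_mono_ae (integrable_const c) hint hae
  -- a.e. y has no atom
  have hcnt : (volume : Measure E) {y | μ {y} ≠ 0} = 0 := by
    have hco : {y : E | 0 < μ {y}}.Countable :=
      Measure.countable_meas_pos_of_disjoint_iUnion
        (fun x => measurableSet_singleton x)
        (fun a b hab => by simp [Function.onFun, Set.disjoint_singleton, hab])
    have heq : {y : E | μ {y} ≠ 0} = {y : E | 0 < μ {y}} := by
      ext y; simp [pos_iff_ne_zero]
    rw [heq]
    exact hco.measure_zero _
  have haeY : ∀ᵐ y ∂(volume.restrict (Metric.closedBall (0:E) R)),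
      ‖Real.exp (-t * ∫ z, vhat d α (z - y) ∂μ)‖ ≤ Real.exp (-(t*c)) := by
    have h0 : ∀ᵐ y : E ∂volume, μ {y} = 0 := by
      rw [ae_iff]
      simpa using hcnt
    filter_upwards [ae_restrict_of_ae h0,
      ae_restrict_mem Metric.isClosed_closedBall.measurableSet] with y hy hymem
    rw [Real.norm_eq_abs, abs_of_pos (Real.exp_pos _), Real.exp_le_exp]
    have hk := key y hy hymem
    nlinarith [mul_le_mul_of_nonneg_left hk ht0.le]
  have hvol : volume (Metric.closedBall (0:E) R) < ⊤ := measure_closedBall_lt_top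
  have hmain := norm_setIntegral_le_of_norm_le_const_ae hvol haeY
  rw [Real.norm_eq_abs] at hmain
  have hstep1 : (∫ y in Metric.closedBall (0:E) R,
      Real.exp (-t * ∫ z, vhat d α (z - y) ∂μ))
      ≤ Real.exp (-(t*c)) * (volume (Metric.closedBall (0:E) R)).toReal :=
    le_trans (le_abs_self _) hmain
  -- volume computation
  have hVol : (volume (Metric.closedBall (0:E) R)).toReal = R ^ d * c₁ := by
    rw [Measure.addHaar_closedBall _ _ hR0.le]
    rw [ENNReal.toReal_mul, ENNReal.toReal_ofReal (by positivity)]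
    have hfr : Module.finrank ℝ E = d := finrank_euclideanSpace_fin
    rw [hfr]
  rw [hVol] at hstep1
  refine le_trans hstep1 ?_
  -- final numeric estimate
  set u : ℝ := t ^ γ with hudef
  have hu0' : u0 ≤ u := htu
  have hu1 : 1 ≤ u := le_trans (le_max_left _ _) hu0'
  have huB : K * c₁ + K * (β/γ + 1) ≤ u := le_trans (le_max_right _ _) hu0'
  have htc : t * c = K⁻¹ * (u * u) := by
    have h6 : c = 2 ^ (-α) * t ^ ((1/α - δ) * (-α)) := by
      rw [hcdef, Real.mul_rpow (by norm_num) hR0.le, hRdef, ← Real.rpow_mul ht0.le]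
    have h7 : (1/α - δ) * (-α) = α * δ - 1 := by
      field_simp
      ring
    have h8 : (2:ℝ) ^ (-α) = K⁻¹ := by
      rw [hKdef, Real.rpow_neg (by norm_num : (0:ℝ) ≤ 2)]
    rw [h6, h7, h8]
    have h9 : t * (K⁻¹ * t ^ (α * δ - 1)) = K⁻¹ * (t ^ (1:ℝ) * t ^ (α * δ - 1)) := by
      rw [Real.rpow_one]; ring
    rw [h9, ← Real.rpow_add ht0]
    have h10 : u * u = t ^ (α * δ) := by
      rw [hudef, ← Real.rpow_add ht0, hγdef]
      ring_nf
    rw [h10]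
    norm_num
  have hlogt : Real.log t * γ ≤ u := by
    have := Real.add_one_le_exp (Real.log t * γ)
    rw [hudef, Real.rpow_def_of_pos ht0]
    linarith
  have htβ : R ^ d ≤ Real.exp (β/γ * u) := by
    have hRd : (R:ℝ) ^ d = t ^ β := by
      rw [hRdef, ← Real.rpow_natCast, ← Real.rpow_mul ht0.le, hβdef]
    rw [hRd, Real.rpow_def_of_pos ht0, Real.exp_le_exp]
    have hlt : Real.log t ≤ u / γ := by
      rw [le_div_iff₀ hγ0]; exact hlogt
    calc Real.log t * β ≤ (u/γ) * β := mul_le_mul_of_nonneg_right hlt hβ0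
      _ = β/γ * u := by ring
  have hc₁exp : c₁ ≤ Real.exp c₁ := by
    have := Real.add_one_le_exp c₁
    linarith
  have hquad : u + (β/γ * u + c₁) ≤ K⁻¹ * (u * u) := by
    have h1 : (K * c₁ + K * (β/γ + 1)) * u ≤ u * u :=
      mul_le_mul_of_nonneg_right huB (by linarith)
    have h2 : K * c₁ ≤ K * c₁ * u := le_mul_of_one_le_right (by positivity) hu1
    have h3 : K * (u + (β/γ * u + c₁)) ≤ u * u := by nlinarith [h1, h2]
    calc u + (β/γ * u + c₁) = K⁻¹ * (K * (u + (β/γ * u + c₁))) := by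
          field_simp
      _ ≤ K⁻¹ * (u * u) := mul_le_mul_of_nonneg_left h3 (by positivity)
  calc Real.exp (-(t*c)) * (R ^ d * c₁)
      ≤ Real.exp (-(t*c)) * (Real.exp (β/γ * u) * Real.exp c₁) := by
        refine mul_le_mul_of_nonneg_left ?_ (Real.exp_pos _).le
        exact mul_le_mul htβ hc₁exp hc₁ (Real.exp_pos _).le
    _ = Real.exp (-(K⁻¹ * (u * u)) + (β/γ * u + c₁)) := by
        rw [htc, ← Real.exp_add, ← Real.exp_add]
    _ ≤ Real.exp (-u) := by
        rw [Real.exp_le_exp]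
        linarith [hquad]
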